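/- (Archimedes, On Conoids and Spheroids 12.) The section of a paraboloid of revolution by a plane that is neither parallel nor perpendicular to the axis is an ellipse whose major axis lies in the plane through the axis at right angles to the cutting plane: let N > 0, m ≠ 0, c ∈ ℝ with r² := N·c + N²·m²/4 > 0 and r > 0. Set P₀ = (N·m/2, 0, N·m²/2 + c), u = (1/√(1+m²), 0, m/√(1+m²)), v = (0, 1, 0). Then the intersection of S = {(x, y, z) ∈ ℝ³ : x² + y² = N·z} with the plane {(x, y, z) : z = m·x + c} equals the set { P₀ + (r·√(1+m²)·cos θ) • u + (r·sin θ) • v : θ ∈ ℝ }, an ellipse with orthonormal in-plane axes u, v, semi-major axis r·√(1+m²) in the plane {y = 0}, and semi-minor axis r, with r·√(1+m²) > r. -/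

import Mathlib

lemma exists_cos_sin (a b r : ℝ) (hr : 0 < r) (h : a ^ 2 + b ^ 2 = r ^ 2) :
    ∃ θ : ℝ, a = r * Real.cos θ ∧ b = r * Real.sin θ := by
  set z : ℂ := ⟨a, b⟩ with hz
  have habs : ‖z‖ = r := by
    rw [Complex.norm_def, Complex.normSq_mk]
    rw [show a * a + b * b = r ^ 2 by nlinarith]
    exact Real.sqrt_sq hr.le
  refine ⟨Complex.arg z, ?_, ?_⟩
  · have := Complex.norm_mul_cos_arg z
    rw [habs] at this; simpa [hz] using this.symm
  · have := Complex.norm_mul_sin_arg z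
    rw [habs] at this; simpa [hz] using this.symm

theorem paraboloid_oblique_section_is_ellipse (N m c r : ℝ) (hN : 0 < N) (hm : m ≠ 0)
    (hr : 0 < r) (hr2 : r ^ 2 = N * c + N ^ 2 * m ^ 2 / 4) :
    ({p : ℝ × ℝ × ℝ | p.1 ^ 2 + p.2.1 ^ 2 = N * p.2.2} ∩
        {p : ℝ × ℝ × ℝ | p.2.2 = m * p.1 + c} =
      {q : ℝ × ℝ × ℝ | ∃ θ : ℝ,
        q = ((N * m / 2, 0, N * m ^ 2 / 2 + c) : ℝ × ℝ × ℝ) +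
            (r * Real.sqrt (1 + m ^ 2) * Real.cos θ) •
              ((1 / Real.sqrt (1 + m ^ 2), 0, m / Real.sqrt (1 + m ^ 2)) : ℝ × ℝ × ℝ) +
            (r * Real.sin θ) • (((0 : ℝ), (1 : ℝ), (0 : ℝ)) : ℝ × ℝ × ℝ)}) ∧
    r * Real.sqrt (1 + m ^ 2) > r := by
  have hs : (0:ℝ) < Real.sqrt (1 + m ^ 2) := Real.sqrt_pos.mpr (by positivity)
  have hcancel : ∀ t : ℝ, r * Real.sqrt (1 + m ^ 2) * t * (1 / Real.sqrt (1 + m ^ 2))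
      = r * t := by
    intro t; field_simp
  have hcancel2 : ∀ t : ℝ, r * Real.sqrt (1 + m ^ 2) * t * (m / Real.sqrt (1 + m ^ 2))
      = r * t * m := by
    intro t; field_simp
  constructor
  · ext ⟨x, y, z⟩
    simp only [Set.mem_inter_iff, Set.mem_setOf_eq, Prod.smul_mk, smul_eq_mul, Prod.mk_add_mk,
      Prod.mk.injEq]
    constructor
    · rintro ⟨h1, h2⟩
      have hcirc : (x - N * m / 2) ^ 2 + y ^ 2 = r ^ 2 := by
        rw [hr2]; nlinarith [h1, h2]
      obtain ⟨θ, hx, hy⟩ := exists_cos_sin _ _ r hr hcirc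
      refine ⟨θ, ?_, ?_, ?_⟩
      · rw [hcancel]; linarith
      · simpa using hy
      · rw [hcancel2, h2]
        have hx' : x = N * m / 2 + r * Real.cos θ := by linarith
        rw [hx']; ring
    · rintro ⟨θ, hx, hy, hz⟩
      rw [hcancel] at hx
      rw [hcancel2] at hz
      have hc2 : Real.cos θ ^ 2 + Real.sin θ ^ 2 = 1 := by
        rw [add_comm]; exact Real.sin_sq_add_cos_sq θ
      constructor
      · subst hx hz; simp only [mul_zero, add_zero, mul_one, zero_add] at hy ⊢
        subst hy; nlinarith [hc2]
      · subst hx hz; ring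
  · have hm2 : 0 < m ^ 2 := by positivity
    nlinarith [Real.sq_sqrt (show (0:ℝ) ≤ 1 + m ^ 2 by positivity), hs]
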